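/- arXiv:1907.03993 — 2 statements merged into one kernel-verified Lean document; each statement's English description precedes it below -/
import Mathlib

section
/- Let a > b ≥ 2 and let B = [[(a-1)/(a+b), 2a/(a+b)], [b/(a+b), (ab-a-b)/(a(a+b))]] with largest eigenvalue λ1. Then B has an eigenvector for λ1 of the form (1, k) with 0 < k < 1. -/
lemma stmt_15_root (p q r s x : ℝ) :
    (!![p,q;r,s] : Matrix (Fin 2) (Fin 2) ℝ).charpoly.IsRoot x ↔
      (x-p)*(x-s) - q*r = 0 := by
  simp [Matrix.charpoly, Matrix.det_fin_two, Matrix.charmatrix_apply_eq,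
    Matrix.charmatrix_apply_ne, Polynomial.IsRoot]

lemma stmt_15_vec (p q r s k lam : ℝ) (h1 : p + q*k = lam) (h2 : r + s*k = lam*k) :
    (!![p,q;r,s] : Matrix (Fin 2) (Fin 2) ℝ).mulVec ![1,k] = lam • ![1,k] := by
  funext i
  fin_cases i <;>
    simp [Matrix.mulVec, dotProduct, Fin.sum_univ_two] <;> linarith

lemma stmt_15_main (p q r s lam1 : ℝ) (qpos : 0 < q) (rpos : 0 < r) (hps : s < p)
    (hineq : r < p - s + q)
    (hroot : (lam1-p)*(lam1-s) - q*r = 0)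
    (hmax : ∀ μ : ℝ, (μ-p)*(μ-s) - q*r = 0 → μ ≤ lam1) :
    ∃ k : ℝ, 0 < k ∧ k < 1 ∧ p + q*k = lam1 ∧ r + s*k = lam1*k := by
  have hq0 : q ≠ 0 := ne_of_gt qpos
  set D : ℝ := (p-s)^2 + 4*q*r with hD
  have hDpos : 0 < D := by nlinarith
  set sD : ℝ := Real.sqrt D with hsD
  have hsDnn : 0 ≤ sD := Real.sqrt_nonneg D
  have hsq : sD^2 = D := Real.sq_sqrt hDpos.le
  have hge : (p+s+sD)/2 ≤ lam1 := by
    apply hmax; nlinarith [hsq]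
  have hx : 2*lam1 - (p+s) = sD := by
    have hxy : sD ≤ 2*lam1 - (p+s) := by linarith
    nlinarith [hsq]
  have hlp : 0 < lam1 - p := by nlinarith [hsq]
  have hlq : lam1 - p < q := by nlinarith [hsq]
  refine ⟨(lam1 - p)/q, div_pos hlp qpos, (div_lt_one qpos).mpr hlq, by field_simp; ring, ?_⟩
  have h2' : (lam1-p)/q * (lam1 - s) = r := by
    field_simp; linarith [hroot]
  linear_combination -h2'

theorem stmt_15 (a b : ℕ) (hb : 2 ≤ b) (hab : b < a)
    (B : Matrix (Fin 2) (Fin 2) ℝ)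
    (hB : B = !![((a:ℝ)-1)/(a+b), 2*a/(a+b);
                 (b:ℝ)/(a+b), ((a:ℝ)*b - a - b)/(a*(a+b))])
    (lam1 : ℝ) (hroot : B.charpoly.IsRoot lam1)
    (hmax : ∀ μ : ℝ, B.charpoly.IsRoot μ → μ ≤ lam1) :
    ∃ k : ℝ, 0 < k ∧ k < 1 ∧ B.mulVec ![1, k] = lam1 • ![1, k] := by
  have hbR : (2:ℝ) ≤ b := by exact_mod_cast hb
  have habR : (b:ℝ) < a := by exact_mod_cast hab
  have hA : (0:ℝ) < a := by linarith
  have hc : (0:ℝ) < (a:ℝ) + b := by linarith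
  obtain ⟨p, hp⟩ : ∃ p : ℝ, p = ((a:ℝ)-1)/(a+b) := ⟨_, rfl⟩
  obtain ⟨q, hq⟩ : ∃ q : ℝ, q = 2*(a:ℝ)/(a+b) := ⟨_, rfl⟩
  obtain ⟨r, hr⟩ : ∃ r : ℝ, r = (b:ℝ)/(a+b) := ⟨_, rfl⟩
  obtain ⟨s, hs⟩ : ∃ s : ℝ, s = ((a:ℝ)*b - a - b)/(a*(a+b)) := ⟨_, rfl⟩
  have hB' : B = !![p, q; r, s] := by rw [hB, hp, hq, hr, hs]
  have qpos : 0 < q := by rw [hq]; positivity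
  have rpos : 0 < r := by rw [hr]; positivity
  have hps : s < p := by
    rw [hp, hs, div_lt_div_iff₀ (by positivity) (by positivity)]
    nlinarith [mul_pos hc (show (0:ℝ) < (a:ℝ)*((a:ℝ)-b) + b by nlinarith)]
  have hineq : r < p - s + q := by
    have h1 : p - s + q - r = (3*(a:ℝ)^2 - 2*a*b + b)/((a:ℝ)*(a+b)) := by
      rw [hp, hq, hr, hs]; field_simp; ring
    have h2 : (0:ℝ) < (3*(a:ℝ)^2 - 2*a*b + b)/((a:ℝ)*(a+b)) :=
      div_pos (by nlinarith) (by positivity)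
    linarith [h1 ▸ h2]
  have key : ∀ x : ℝ, B.charpoly.IsRoot x ↔ (x-p)*(x-s) - q*r = 0 := by
    intro x; rw [hB']; exact stmt_15_root p q r s x
  obtain ⟨k, hk0, hk1, hv1, hv2⟩ :=
    stmt_15_main p q r s lam1 qpos rpos hps hineq ((key lam1).mp hroot)
      (fun μ hμ => hmax μ ((key μ).mpr hμ))
  exact ⟨k, hk0, hk1, by rw [hB']; exact stmt_15_vec p q r s k lam1 hv1 hv2⟩
end

section
/- Let a > b ≥ 2 and define the sequence of vectors W_n ∈ ℝ³ by W_0 = (1,1,1) and W_{n+1} = A W_n where A is the matrix [[(a-1)/(a+b), 2a/(a+b), 0], [b/(a+b), (ab-a-b)/(a(a+b)), 1/(a+b)], [0, 0, 1/a]]. Then for all n, all coordinates of W_n are positive and W_n satisfies (W_n)_1 ≥ (W_n)_2 ≥ (W_n)_3. -/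
set_option maxHeartbeats 1000000


theorem stmt_18 (a b : ℕ) (hb : 2 ≤ b) (hab : b < a)
    (W : ℕ → (Fin 3 → ℝ))
    (hW0 : W 0 = ![1, 1, 1])
    (hW : ∀ n, W (n+1) =
      (!![((a:ℝ)-1)/(a+b), 2*a/(a+b), 0;
          (b:ℝ)/(a+b), ((a:ℝ)*b - a - b)/(a*(a+b)), 1/(a+b);
          0, 0, 1/(a:ℝ)]).mulVec (W n)) :
    ∀ n, (0 < W n 0 ∧ 0 < W n 1 ∧ 0 < W n 2) ∧ (W n 1 ≤ W n 0 ∧ W n 2 ≤ W n 1) := by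
  have hy : (2:ℝ) ≤ (b:ℝ) := by exact_mod_cast hb
  have hxy : (b:ℝ) + 1 ≤ (a:ℝ) := by exact_mod_cast hab
  have hx : (3:ℝ) ≤ (a:ℝ) := by linarith
  have hxpos : (0:ℝ) < (a:ℝ) := by linarith
  have hxypos : (0:ℝ) < (a:ℝ) + (b:ℝ) := by linarith
  have hdpos : (0:ℝ) < (a:ℝ) * ((a:ℝ) + (b:ℝ)) := by positivity
  have hab1 : (1:ℝ) ≤ (a:ℝ) * b - a - b := by nlinarith
  intro n
  induction n with
  | zero => simp [hW0]
  | succ n ih =>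
    obtain ⟨⟨h0, h1, h2⟩, h10, h21⟩ := ih
    rw [hW n]
    simp only [Matrix.mulVec, dotProduct, Fin.sum_univ_three]
    norm_num [Matrix.cons_val_zero, Matrix.cons_val_one, Matrix.head_cons, Matrix.cons_val_two, Matrix.tail_cons]
    set d0 := W n 0; set d1 := W n 1; set d2 := W n 2
    clear_value d0 d1 d2
    refine ⟨⟨?_, ?_, ?_⟩, ?_, ?_⟩
    · rw [div_mul_eq_mul_div, div_mul_eq_mul_div, ← add_div, lt_div_iff₀ hxypos]
      nlinarith
    · have e : (b:ℝ)/(a+b)*d0 + ((a:ℝ)*b-a-b)/(a*(a+b))*d1 + ((a:ℝ)+b)⁻¹*d2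
          = ((a:ℝ)*b*d0 + ((a:ℝ)*b-a-b)*d1 + a*d2) / (a*(a+b)) := by
        field_simp
      rw [e]
      apply div_pos ?_ hdpos
      nlinarith
    · positivity
    · rw [← sub_nonneg]
      have e : ((a:ℝ)-1)/(a+b)*d0 + 2*a/(a+b)*d1 -
          ((b:ℝ)/(a+b)*d0 + ((a:ℝ)*b-a-b)/(a*(a+b))*d1 + ((a:ℝ)+b)⁻¹*d2)
          = ((a:ℝ)*(a-1-b)*d0 + (2*(a:ℝ)*a - a*b + a + b)*d1 - a*d2) / (a*(a+b)) := by
        field_simp; ring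
      rw [e]
      apply div_nonneg ?_ hdpos.le
      have hc : (0:ℝ) ≤ (a:ℝ) - 1 - b := by linarith
      nlinarith [mul_nonneg (mul_nonneg hxpos.le hc) h0.le, mul_le_mul_of_nonneg_left h21 hxpos.le, mul_nonneg (show (0:ℝ) ≤ 2*(a:ℝ)*a - a*b + b by nlinarith) h1.le]
    · rw [← sub_nonneg]
      have e : (b:ℝ)/(a+b)*d0 + ((a:ℝ)*b-a-b)/(a*(a+b))*d1 + ((a:ℝ)+b)⁻¹*d2 - ((a:ℝ))⁻¹*d2
          = ((a:ℝ)*b*d0 + ((a:ℝ)*b-a-b)*d1 - b*d2) / (a*(a+b)) := by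
        field_simp; ring
      rw [e]
      apply div_nonneg ?_ hdpos.le
      have hd02 : d2 ≤ d0 := le_trans h21 h10
      have t1 : (a:ℝ)*b*d2 ≤ (a:ℝ)*b*d0 := mul_le_mul_of_nonneg_left hd02 (by positivity)
      have t2 : (0:ℝ) ≤ ((a:ℝ)*b-a-b)*d1 := mul_nonneg (by linarith) h1.le
      have t3 : (0:ℝ) ≤ (a:ℝ)*b*d2 - b*d2 := by
        have := mul_nonneg (show (0:ℝ) ≤ (b:ℝ)*((a:ℝ)-1) by nlinarith) h2.le
        nlinarith
      linarith
end
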